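/- Let A_min ⊆ A_max be closed operators on a Hilbert space H with domains D_min ⊆ D_max, dim(D_max/D_min) < ∞, all intermediate extensions Fredholm with ind(A_D) = ind(A_min) + dim(D/D_min). Suppose λ lies in the background resolvent set and D is an intermediate domain with A_D − λ bijective. Let B_D(λ) = (A_D − λ)^{-1}, let B_max(λ) be any bounded right inverse of A_max − λ mapping H into D_max, let B_min(λ) be any bounded left inverse of A_min − λ defined on H with range in D_min, and let π_{K_λ,D} be the projection of D_max onto K_λ = ker(A_max − λ) along D. Then B_D(λ) = B_max(λ) − (I − B_min(λ)(A_max − λ)) ∘ π_{K_λ,D} ∘ B_max(λ). -/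
import Mathlib


/-- The resolvent formula
`B_D(λ) = B_max(λ) − (I − B_min(λ)(A−λ)) π_{K_λ,D} B_max(λ)`. -/
theorem stmt_8 {H : Type*} [NormedAddCommGroup H] [InnerProductSpace ℂ H] [CompleteSpace H]
    (Dmax : Submodule ℂ H) (A : ↥Dmax →ₗ[ℂ] H) (Dmin D : Submodule ℂ ↥Dmax)
    (hDD : Dmin ≤ D) (hcodim : FiniteDimensional ℂ (↥Dmax ⧸ Dmin))
    (lam : ℂ)
    -- λ in the background resolvent set
    (hinj : Function.Injective ((A - lam • Dmax.subtype).domRestrict Dmin))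
    (hsurj : Function.Surjective (A - lam • Dmax.subtype))
    -- A_D − λ bijective, with inverse B_D(λ)
    (hbij : Function.Bijective ((A - lam • Dmax.subtype).domRestrict D))
    (BD : H →ₗ[ℂ] ↥Dmax) (hBD0 : ∀ f, BD f ∈ D)
    (hBD1 : ∀ f, (A - lam • Dmax.subtype) (BD f) = f)
    -- B_max(λ): a right inverse of A_max − λ
    (Bmax : H →ₗ[ℂ] ↥Dmax) (hBmax : ∀ f, (A - lam • Dmax.subtype) (Bmax f) = f)
    -- B_min(λ): a left inverse of A_min − λ with range in D_min
    (Bmin : H →ₗ[ℂ] ↥Dmax) (hBmin0 : ∀ f, Bmin f ∈ Dmin)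
    (hBmin1 : ∀ u : ↥Dmax, u ∈ Dmin → Bmin ((A - lam • Dmax.subtype) u) = u)
    -- π_{K_λ,D}: the projection of D_max onto K_λ = ker(A_max − λ) along D
    (π : ↥Dmax →ₗ[ℂ] ↥Dmax)
    (hπK : ∀ u, π u ∈ LinearMap.ker (A - lam • Dmax.subtype))
    (hπ1 : ∀ u ∈ LinearMap.ker (A - lam • Dmax.subtype), π u = u)
    (hπ0 : ∀ u ∈ D, π u = 0) :
    ∀ f : H, BD f =
      Bmax f - (π (Bmax f) - Bmin ((A - lam • Dmax.subtype) (π (Bmax f)))) := by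
  intro f
  have hk : (A - lam • Dmax.subtype) (π (Bmax f)) = 0 := hπK (Bmax f)
  rw [hk, map_zero, sub_zero]
  have hker : Bmax f - BD f ∈ LinearMap.ker (A - lam • Dmax.subtype) := by
    simp [LinearMap.mem_ker, map_sub, hBmax f, hBD1 f]
  have : π (Bmax f) = Bmax f - BD f := by
    have := hπ1 _ hker
    have h0 := hπ0 _ (hBD0 f)
    calc π (Bmax f) = π (Bmax f - BD f) + π (BD f) := by rw [← map_add, sub_add_cancel]
      _ = Bmax f - BD f := by rw [this, h0, add_zero]
  rw [this]; abel
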